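/- Let n ≥ 1, f ∈ L²(ℂ^n) and k ∈ ℤ_+. Then the spectral projection z ↦ f×φ_k^{n−1}(z) = ∫_{ℂ^n} f(z−w) φ_k^{n−1}(w) e^{(i/2) Im(z·w̄)} dw is a real analytic function on ℂ^n ≅ ℝ^{2n}. -/

import Mathlib

open MeasureTheory Metric Complex
open scoped ENNReal ComplexConjugate BigOperators

noncomputable instance (n : ℕ) : MeasurableSpace (EuclideanSpace ℂ (Fin n)) := borel _
instance (n : ℕ) : BorelSpace (EuclideanSpace ℂ (Fin n)) := ⟨rfl⟩

/-- Laguerre polynomial `L_k^α(x) = ∑_{j=0}^k C(k+α, k-j) (-x)^j / j!`. -/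
noncomputable def laguerreL (k α : ℕ) (x : ℝ) : ℝ :=
  ∑ j ∈ Finset.range (k + 1), ((k + α).choose (k - j) : ℝ) * (-x) ^ j / (j.factorial : ℝ)

/-- Laguerre function `φ_k^{n-1}(z) = L_k^{n-1}(|z|²/2) e^{-|z|²/4}` on `ℂ^n`. -/
noncomputable def laguerrePhi (n k : ℕ) (z : EuclideanSpace ℂ (Fin n)) : ℂ :=
  ((laguerreL k (n - 1) (‖z‖ ^ 2 / 2) * Real.exp (-‖z‖ ^ 2 / 4) : ℝ) : ℂ)

/-- Spectral projection `f × φ_k^{n-1}(z) = ∫_{ℂ^n} f(z-w) φ_k^{n-1}(w) e^{(i/2) Im(z·w̄)} dw`. -/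
noncomputable def specProj (n k : ℕ) (f : EuclideanSpace ℂ (Fin n) → ℂ)
    (z : EuclideanSpace ℂ (Fin n)) : ℂ :=
  ∫ w, f (z - w) * laguerrePhi n k w *
    Complex.exp ((Complex.I / 2) * (((∑ j, z j * conj (w j)).im : ℝ) : ℂ)) ∂volume

namespace SpecProjAux

noncomputable section

variable {n : ℕ}

local notation "𝔼" => EuclideanSpace ℂ (Fin n)

/-! ### Elementary real inequalities -/

theorem pow_le_factorial_mul_exp {x : ℝ} (hx : 0 ≤ x) (m : ℕ) :
    x ^ m ≤ (m.factorial : ℝ) * Real.exp x := by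
  have h := Real.sum_le_exp_of_nonneg hx (m + 1)
  have h2 : x ^ m / (m.factorial : ℝ) ≤ Real.exp x := by
    refine le_trans ?_ h
    exact Finset.single_le_sum (f := fun i => x ^ i / (i.factorial : ℝ))
      (fun i _ => by positivity) (Finset.self_mem_range_succ m)
  have hm : (0:ℝ) < (m.factorial : ℝ) := by positivity
  rw [div_le_iff₀ hm] at h2
  linarith [h2]

theorem pow_le_factorial_mul_exp' {x : ℝ} (hx : 0 ≤ x) (m : ℕ) :
    x ^ m ≤ (m.factorial : ℝ) * (2 : ℝ)⁻¹ ^ m * Real.exp (2 * x) := by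
  have h := pow_le_factorial_mul_exp (by linarith : (0:ℝ) ≤ 2 * x) m
  rw [mul_pow] at h
  have h3 : (0:ℝ) < 2 ^ m := by positivity
  have h4 : x ^ m ≤ ((m.factorial : ℝ) * Real.exp (2 * x)) / 2 ^ m := by
    rw [le_div_iff₀ h3]; linarith
  calc x ^ m ≤ ((m.factorial : ℝ) * Real.exp (2 * x)) / 2 ^ m := h4
    _ = (m.factorial : ℝ) * (2 : ℝ)⁻¹ ^ m * Real.exp (2 * x) := by
        rw [inv_pow]; field_simp

/-! ### The two continuous linear maps -/

/-- `z ↦ Re⟪u,z⟫` as a real continuous linear map into `ℂ`. -/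
def betaCLM (u : 𝔼) : 𝔼 →L[ℝ] ℂ :=
  (Complex.ofRealCLM.comp Complex.reCLM).comp ((innerSL ℂ u).restrictScalars ℝ)

/-- `z ↦ (1/2) conj ⟪u,z⟫` as a real continuous linear map into `ℂ`. -/
def ellCLM (u : 𝔼) : 𝔼 →L[ℝ] ℂ :=
  (2⁻¹ : ℝ) • ((Complex.conjCLE.toContinuousLinearMap).comp ((innerSL ℂ u).restrictScalars ℝ))

theorem betaCLM_apply (u z : 𝔼) :
    betaCLM u z = (((inner ℂ u z).re : ℝ) : ℂ) := rfl

theorem ellCLM_apply (u z : 𝔼) :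
    ellCLM u z = (2⁻¹ : ℂ) * conj (inner (𝕜 := ℂ) u z) := by
  simp [ellCLM, Complex.real_smul]

theorem betaCLM_apply_norm_le (u z : 𝔼) : ‖betaCLM u z‖ ≤ ‖u‖ * ‖z‖ := by
  rw [betaCLM_apply]
  calc ‖(((inner (𝕜 := ℂ) u z).re : ℝ) : ℂ)‖ = |(inner (𝕜 := ℂ) u z).re| := by
        rw [Complex.norm_real]; exact Real.norm_eq_abs _
    _ ≤ ‖inner (𝕜 := ℂ) u z‖ := Complex.abs_re_le_norm _
    _ = ‖inner (𝕜 := ℂ) u z‖ := rfl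
    _ ≤ ‖u‖ * ‖z‖ := norm_inner_le_norm (𝕜 := ℂ) u z

theorem betaCLM_norm_le (u : 𝔼) : ‖betaCLM u‖ ≤ ‖u‖ :=
  ContinuousLinearMap.opNorm_le_bound _ (norm_nonneg u) (betaCLM_apply_norm_le u)

theorem ellCLM_apply_norm_le (u z : 𝔼) : ‖ellCLM u z‖ ≤ ‖u‖ * ‖z‖ := by
  rw [ellCLM_apply]
  rw [norm_mul, RCLike.norm_conj]
  calc ‖(2⁻¹ : ℂ)‖ * ‖(inner (𝕜 := ℂ) u z)‖ ≤ 1 * (‖u‖ * ‖z‖) := by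
        apply mul_le_mul ?_ (norm_inner_le_norm (𝕜 := ℂ) u z) (norm_nonneg _) zero_le_one
        simp; norm_num
    _ = ‖u‖ * ‖z‖ := one_mul _

theorem ellCLM_norm_le (u : 𝔼) : ‖ellCLM u‖ ≤ ‖u‖ :=
  ContinuousLinearMap.opNorm_le_bound _ (norm_nonneg u) (ellCLM_apply_norm_le u)

theorem continuous_betaCLM : Continuous (betaCLM (n := n)) := by
  unfold betaCLM
  exact (ContinuousLinearMap.compL ℝ 𝔼 ℂ ℂ (Complex.ofRealCLM.comp Complex.reCLM)).continuous.comp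
    ((ContinuousLinearMap.restrictScalarsL ℂ 𝔼 ℂ ℝ ℝ).continuous.comp (innerSL ℂ).continuous)

theorem continuous_ellCLM : Continuous (ellCLM (n := n)) := by
  unfold ellCLM
  exact ((continuous_const (y := (2⁻¹ : ℝ))).smul
    ((ContinuousLinearMap.compL ℝ 𝔼 ℂ ℂ (Complex.conjCLE.toContinuousLinearMap)).continuous.comp
    ((ContinuousLinearMap.restrictScalarsL ℂ 𝔼 ℂ ℝ ℝ).continuous.comp (innerSL ℂ).continuous)))

theorem continuous_betaCLM_apply (z : 𝔼) : Continuous fun u : 𝔼 => betaCLM u z :=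
  ((ContinuousLinearMap.apply ℝ ℂ z).continuous.comp continuous_betaCLM)

theorem continuous_ellCLM_apply (z : 𝔼) : Continuous fun u : 𝔼 => ellCLM u z :=
  ((ContinuousLinearMap.apply ℝ ℂ z).continuous.comp continuous_ellCLM)

/-! ### Exponential moments -/

/-- `g` is measurable and has all exponential moments. -/
def HasExpMoments (g : 𝔼 → ℂ) : Prop :=
  AEStronglyMeasurable g volume ∧
    ∀ r : ℝ, Integrable (fun u : 𝔼 => ‖g u‖ * Real.exp (r * ‖u‖)) volume

theorem HasExpMoments.integrable_bound {g : 𝔼 → ℂ} (hg : HasExpMoments g)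
    {h : 𝔼 → ℂ} (hm : AEStronglyMeasurable h volume) (C r : ℝ)
    (hb : ∀ u, ‖h u‖ ≤ C * (‖g u‖ * Real.exp (r * ‖u‖))) : Integrable h volume :=
  ((hg.2 r).const_mul C).mono' hm (Filter.Eventually.of_forall hb)

theorem HasExpMoments.integrable_term {g : 𝔼 → ℂ} (hg : HasExpMoments g) (b m : ℕ) (z : 𝔼) :
    Integrable (fun u : 𝔼 => g u * (betaCLM u z) ^ b * (ellCLM u z) ^ m) volume := by
  refine hg.integrable_bound ?_ (((b + m).factorial : ℝ) * ‖z‖ ^ (b + m)) 1 (fun u => ?_)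
  · exact (hg.1.mul (((continuous_betaCLM_apply z).pow b).aestronglyMeasurable)).mul
      (((continuous_ellCLM_apply z).pow m).aestronglyMeasurable)
  · have h1 : ‖g u * betaCLM u z ^ b * ellCLM u z ^ m‖ ≤
        ‖g u‖ * (‖u‖ * ‖z‖) ^ b * (‖u‖ * ‖z‖) ^ m := by
      rw [norm_mul, norm_mul, norm_pow, norm_pow]
      gcongr <;> first
        | exact norm_nonneg _
        | exact betaCLM_apply_norm_le u z
        | exact ellCLM_apply_norm_le u z
    refine h1.trans ?_
    have h2 : (‖u‖ * ‖z‖) ^ b * (‖u‖ * ‖z‖) ^ m = ‖z‖ ^ (b+m) * ‖u‖ ^ (b+m) := by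
      rw [← pow_add]; ring
    have h3 : ‖u‖ ^ (b + m) ≤ ((b+m).factorial : ℝ) * Real.exp ‖u‖ :=
      pow_le_factorial_mul_exp (norm_nonneg u) _
    calc ‖g u‖ * (‖u‖ * ‖z‖) ^ b * (‖u‖ * ‖z‖) ^ m
        = ‖g u‖ * (‖z‖ ^ (b+m) * ‖u‖ ^ (b+m)) := by rw [mul_assoc, h2]
      _ ≤ ‖g u‖ * (‖z‖ ^ (b+m) * (((b+m).factorial : ℝ) * Real.exp ‖u‖)) := by
          gcongr <;> first
            | exact norm_nonneg _
            | positivity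
      _ = ((b + m).factorial : ℝ) * ‖z‖ ^ (b + m) * (‖g u‖ * Real.exp (1 * ‖u‖)) := by
          rw [one_mul]; ring

theorem HasExpMoments.integrable_exp_term {g : 𝔼 → ℂ} (hg : HasExpMoments g) (b : ℕ) (z : 𝔼) :
    Integrable (fun u : 𝔼 => g u * (betaCLM u z) ^ b * Complex.exp (ellCLM u z)) volume := by
  refine hg.integrable_bound ?_ ((b.factorial : ℝ) * ‖z‖ ^ b) (1 + ‖z‖) (fun u => ?_)
  · exact (hg.1.mul (((continuous_betaCLM_apply z).pow b).aestronglyMeasurable)).mul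
      ((Complex.continuous_exp.comp (continuous_ellCLM_apply z)).aestronglyMeasurable)
  · have hexp : ‖Complex.exp (ellCLM u z)‖ ≤ Real.exp (‖z‖ * ‖u‖) := by
      rw [Complex.norm_exp]
      apply Real.exp_le_exp.2
      refine (Complex.re_le_norm _).trans ?_
      exact (ellCLM_apply_norm_le u z).trans (by rw [mul_comm])
    have h1 : ‖g u * betaCLM u z ^ b * Complex.exp (ellCLM u z)‖ ≤
        ‖g u‖ * (‖u‖ * ‖z‖) ^ b * Real.exp (‖z‖ * ‖u‖) := by
      rw [norm_mul, norm_mul, norm_pow]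
      gcongr <;> first
        | exact norm_nonneg _
        | exact betaCLM_apply_norm_le u z
        | exact hexp
    refine h1.trans ?_
    have h3 : ‖u‖ ^ b ≤ (b.factorial : ℝ) * Real.exp ‖u‖ :=
      pow_le_factorial_mul_exp (norm_nonneg u) _
    have key : ‖g u‖ * (‖u‖ * ‖z‖) ^ b * Real.exp (‖z‖ * ‖u‖) =
        ‖g u‖ * (‖u‖ ^ b * ‖z‖ ^ b) * Real.exp (‖z‖ * ‖u‖) := by rw [mul_pow]
    rw [key]
    calc ‖g u‖ * (‖u‖ ^ b * ‖z‖ ^ b) * Real.exp (‖z‖ * ‖u‖)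
        ≤ ‖g u‖ * (((b.factorial : ℝ) * Real.exp ‖u‖) * ‖z‖ ^ b) * Real.exp (‖z‖ * ‖u‖) := by
          gcongr <;> first
            | exact norm_nonneg _
            | positivity
      _ = (b.factorial : ℝ) * ‖z‖ ^ b * (‖g u‖ * (Real.exp ‖u‖ * Real.exp (‖z‖ * ‖u‖))) := by ring
      _ = (b.factorial : ℝ) * ‖z‖ ^ b * (‖g u‖ * Real.exp ((1 + ‖z‖) * ‖u‖)) := by
          rw [← Real.exp_add]; ring_nf

theorem arith_key {r x : ℝ} (hr : 0 ≤ r) (hx : 0 ≤ x) (b m : ℕ) :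
    r ^ (b + m) * x ^ (b + m) * ((m.factorial : ℝ))⁻¹ ≤
      (2 : ℝ)⁻¹ ^ (b + m) * (2 ^ b * (b.factorial : ℝ) * Real.exp (3 * r * x)) := by
  have ht : 0 ≤ r * x := mul_nonneg hr hx
  have h1 : (r * x) ^ b ≤ (b.factorial : ℝ) * Real.exp (r * x) :=
    pow_le_factorial_mul_exp ht b
  have h2 : (r * x) ^ m ≤ (m.factorial : ℝ) * (2 : ℝ)⁻¹ ^ m * Real.exp (2 * (r * x)) :=
    pow_le_factorial_mul_exp' ht m
  have hm : (0:ℝ) < (m.factorial : ℝ) := by positivity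
  have h2b : (2:ℝ)⁻¹ ^ (b + m) * 2 ^ b = (2:ℝ)⁻¹ ^ m := by
    rw [pow_add]
    have : ((2:ℝ)⁻¹) ^ b * 2 ^ b = 1 := by
      rw [← mul_pow]; norm_num
    calc (2:ℝ)⁻¹ ^ b * (2:ℝ)⁻¹ ^ m * 2 ^ b = ((2:ℝ)⁻¹ ^ b * 2 ^ b) * (2:ℝ)⁻¹ ^ m := by ring
      _ = (2:ℝ)⁻¹ ^ m := by rw [this, one_mul]
  calc r ^ (b + m) * x ^ (b + m) * ((m.factorial : ℝ))⁻¹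
      = ((r * x) ^ b * (r * x) ^ m) * ((m.factorial : ℝ))⁻¹ := by
        rw [← mul_pow, pow_add]
    _ ≤ (((b.factorial : ℝ) * Real.exp (r * x)) *
          ((m.factorial : ℝ) * (2 : ℝ)⁻¹ ^ m * Real.exp (2 * (r * x)))) *
            ((m.factorial : ℝ))⁻¹ := by
        refine mul_le_mul_of_nonneg_right (mul_le_mul h1 h2 (by positivity) (by positivity))
          (by positivity)
    _ = (2 : ℝ)⁻¹ ^ m * ((b.factorial : ℝ) * (Real.exp (r * x) * Real.exp (2 * (r * x)))) := by
        field_simp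
    _ = (2 : ℝ)⁻¹ ^ (b + m) * (2 ^ b * (b.factorial : ℝ) * Real.exp (3 * r * x)) := by
        rw [← Real.exp_add, ← h2b]
        ring_nf
/-! ### The multilinear series -/

/-- The basic multilinear map `(z_1, …, z_N) ↦ ∏_{i<b} β_u(z_i) ∏_{i≥b} ℓ_u(z_i)`. -/
def multiM (b N : ℕ) (u : 𝔼) : ContinuousMultilinearMap ℝ (fun _ : Fin N => 𝔼) ℂ :=
  (ContinuousMultilinearMap.mkPiAlgebraFin ℝ N ℂ).compContinuousLinearMap
    (fun i => if (i : ℕ) < b then betaCLM u else ellCLM u)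

theorem fin_prod_ite (N b : ℕ) (hb : b ≤ N) (X Y : ℂ) :
    (∏ i : Fin N, if (i : ℕ) < b then X else Y) = X ^ b * Y ^ (N - b) := by
  rw [Fin.prod_univ_eq_prod_range (fun i => if i < b then X else Y) N]
  rw [← Finset.prod_range_mul_prod_Ico _ hb]
  have h1 : ∏ i ∈ Finset.range b, (if i < b then X else Y) = X ^ b := by
    rw [Finset.prod_congr rfl (fun i hi => if_pos (Finset.mem_range.1 hi))]
    simp
  have h2 : ∏ i ∈ Finset.Ico b N, (if i < b then X else Y) = Y ^ (N - b) := by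
    rw [Finset.prod_congr rfl (fun i hi => if_neg (by
      have := (Finset.mem_Ico.1 hi).1; omega))]
    simp [Nat.card_Ico]
  rw [h1, h2]

theorem multiM_apply (b N : ℕ) (hbN : b ≤ N) (u z : 𝔼) :
    multiM b N u (fun _ => z) = (betaCLM u z) ^ b * (ellCLM u z) ^ (N - b) := by
  rw [multiM, ContinuousMultilinearMap.compContinuousLinearMap_apply,
    ContinuousMultilinearMap.mkPiAlgebraFin_apply, List.prod_ofFn]
  rw [← fin_prod_ite N b hbN (betaCLM u z) (ellCLM u z)]
  refine Finset.prod_congr rfl (fun i _ => ?_)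
  split_ifs <;> rfl

theorem multiM_norm_le (b N : ℕ) (u : 𝔼) : ‖multiM b N u‖ ≤ ‖u‖ ^ N := by
  refine (ContinuousMultilinearMap.norm_compContinuousLinearMap_le _ _).trans ?_
  rw [ContinuousMultilinearMap.norm_mkPiAlgebraFin, one_mul]
  calc (∏ i : Fin N, ‖if (i : ℕ) < b then betaCLM u else ellCLM u‖)
      ≤ ∏ _i : Fin N, ‖u‖ := by
        refine Finset.prod_le_prod (fun i _ => norm_nonneg _) (fun i _ => ?_)
        split_ifs
        · exact betaCLM_norm_le u
        · exact ellCLM_norm_le u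
    _ = ‖u‖ ^ N := by simp

theorem continuous_multiM (b N : ℕ) : Continuous fun u : 𝔼 => multiM b N u := by
  have : (fun u : 𝔼 => multiM b N u) = fun u : 𝔼 =>
      (ContinuousMultilinearMap.compContinuousLinearMapLRight
        (ContinuousMultilinearMap.mkPiAlgebraFin ℝ N ℂ))
        (fun i : Fin N => if (i : ℕ) < b then betaCLM u else ellCLM u) := rfl
  rw [this]
  refine (ContinuousMultilinearMap.compContinuousLinearMapLRight
      (ContinuousMultilinearMap.mkPiAlgebraFin ℝ N ℂ)).cont.comp ?_
  refine continuous_pi (fun i => ?_)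
  split_ifs
  · exact continuous_betaCLM
  · exact continuous_ellCLM

theorem integrable_smul_multiM {g : 𝔼 → ℂ} (hg : HasExpMoments g) (b N : ℕ) :
    Integrable (fun u : 𝔼 => g u • multiM b N u) volume := by
  haveI : SecondCountableTopologyEither 𝔼 (ContinuousMultilinearMap ℝ (fun _ : Fin N => 𝔼) ℂ) :=
    secondCountableTopologyEither_of_left _ _
  refine (((hg.2 1).const_mul (N.factorial : ℝ)).mono'
    (hg.1.smul (continuous_multiM b N).aestronglyMeasurable) ?_)
  refine Filter.Eventually.of_forall (fun u => ?_)
  refine (norm_smul_le (g u) (multiM b N u)).trans ?_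
  calc ‖g u‖ * ‖multiM b N u‖ ≤ ‖g u‖ * ‖u‖ ^ N := by
        gcongr <;> first
          | exact norm_nonneg _
          | exact multiM_norm_le b N u
    _ ≤ ‖g u‖ * ((N.factorial : ℝ) * Real.exp ‖u‖) := by
        gcongr <;> first
          | exact norm_nonneg _
          | exact pow_le_factorial_mul_exp (norm_nonneg u) N
    _ = (N.factorial : ℝ) * (‖g u‖ * Real.exp (1 * ‖u‖)) := by rw [one_mul]; ring

/-- The candidate power series of `serF` at `0`. -/
def serP (g : 𝔼 → ℂ) (b : ℕ) : FormalMultilinearSeries ℝ 𝔼 ℂ := fun N =>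
  if b ≤ N then (((N - b).factorial : ℝ))⁻¹ • ∫ u, g u • multiM b N u ∂volume else 0

/-- The function `z ↦ ∫ g(u) (Re⟪u,z⟫)^b e^{(1/2) conj ⟪u,z⟫} du`. -/
def serF (g : 𝔼 → ℂ) (b : ℕ) (z : 𝔼) : ℂ :=
  ∫ u, g u * (betaCLM u z) ^ b * Complex.exp (ellCLM u z) ∂volume

theorem serP_apply {g : 𝔼 → ℂ} (hg : HasExpMoments g) (b N : ℕ) (hbN : b ≤ N) (z : 𝔼) :
    serP g b N (fun _ => z) =
      (((N - b).factorial : ℝ))⁻¹ •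
        ∫ u, g u * (betaCLM u z) ^ b * (ellCLM u z) ^ (N - b) ∂volume := by
  have hInt := integrable_smul_multiM hg b N
  simp only [serP, if_pos hbN, ContinuousMultilinearMap.smul_apply]
  congr 1
  have hcomm := (ContinuousMultilinearMap.apply ℝ (fun _ : Fin N => 𝔼) ℂ
    (fun _ => z)).integral_comp_comm hInt
  calc (∫ u, g u • multiM b N u ∂volume) (fun _ => z)
      = ∫ u, (g u • multiM b N u) (fun _ => z) ∂volume := hcomm.symm
    _ = ∫ u, g u * (betaCLM u z) ^ b * (ellCLM u z) ^ (N - b) ∂volume := by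
        refine integral_congr_ae (Filter.Eventually.of_forall fun u => ?_)
        simp only [ContinuousMultilinearMap.smul_apply, multiM_apply b N hbN, smul_eq_mul,
          mul_assoc]

theorem serP_norm_le {g : 𝔼 → ℂ} (hg : HasExpMoments g) (b N : ℕ) {r : ℝ} (hr : 0 ≤ r) :
    ‖serP g b N‖ * r ^ N ≤
      (2 : ℝ)⁻¹ ^ N *
        (2 ^ b * (b.factorial : ℝ) *
          ∫ u : 𝔼, ‖g u‖ * Real.exp (3 * r * ‖u‖) ∂volume) := by
  have hintnn : (0:ℝ) ≤ ∫ u : 𝔼, ‖g u‖ * Real.exp (3 * r * ‖u‖) ∂volume :=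
    integral_nonneg (fun u => by positivity)
  by_cases hbN : b ≤ N
  · have hint1 : Integrable (fun u : 𝔼 => ‖g u‖ * ‖u‖ ^ N) volume := by
      refine ((hg.2 1).const_mul (N.factorial : ℝ)).mono'
        (hg.1.norm.mul ((continuous_norm.pow N).aestronglyMeasurable)) ?_
      refine Filter.Eventually.of_forall fun u => ?_
      rw [Real.norm_eq_abs, _root_.abs_of_nonneg (by positivity : (0:ℝ) ≤ ‖g u‖ * ‖u‖ ^ N)]
      calc ‖g u‖ * ‖u‖ ^ N ≤ ‖g u‖ * ((N.factorial : ℝ) * Real.exp ‖u‖) := by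
            gcongr <;> first
              | exact norm_nonneg _
              | exact pow_le_factorial_mul_exp (norm_nonneg u) N
        _ = (N.factorial : ℝ) * (‖g u‖ * Real.exp (1 * ‖u‖)) := by rw [one_mul]; ring
    have hint2 : Integrable (fun u : 𝔼 => ‖g u‖ * Real.exp (3 * r * ‖u‖)) volume := by
      simpa [mul_assoc] using hg.2 (3 * r)
    have hPn : ‖serP g b N‖ ≤ (((N - b).factorial : ℝ))⁻¹ * ∫ u, ‖g u‖ * ‖u‖ ^ N ∂volume := by
      simp only [serP, if_pos hbN]
      rw [norm_smul ((((N - b).factorial : ℝ))⁻¹) (∫ u, g u • multiM b N u ∂volume),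
        Real.norm_eq_abs, _root_.abs_of_nonneg (by positivity : (0:ℝ) ≤ (((N - b).factorial : ℝ))⁻¹)]
      refine mul_le_mul_of_nonneg_left ?_ (by positivity)
      refine norm_integral_le_of_norm_le hint1 (Filter.Eventually.of_forall fun u => ?_)
      refine (norm_smul_le (g u) (multiM b N u)).trans ?_
      exact mul_le_mul_of_nonneg_left (multiM_norm_le b N u) (norm_nonneg _)
    have key : ∫ u, (r ^ N * (((N - b).factorial : ℝ))⁻¹) * (‖g u‖ * ‖u‖ ^ N) ∂volume ≤
        ∫ u, ((2:ℝ)⁻¹ ^ N * (2 ^ b * (b.factorial : ℝ))) *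
          (‖g u‖ * Real.exp (3 * r * ‖u‖)) ∂volume := by
      refine integral_mono (hint1.const_mul _) (hint2.const_mul _) (fun u => ?_)
      have h := arith_key hr (norm_nonneg u) b (N - b)
      rw [Nat.add_sub_cancel' hbN] at h
      have hgn : (0:ℝ) ≤ ‖g u‖ := norm_nonneg _
      calc (r ^ N * (((N - b).factorial : ℝ))⁻¹) * (‖g u‖ * ‖u‖ ^ N)
          = ‖g u‖ * (r ^ N * ‖u‖ ^ N * (((N - b).factorial : ℝ))⁻¹) := by ring
        _ ≤ ‖g u‖ * ((2:ℝ)⁻¹ ^ N * (2 ^ b * (b.factorial : ℝ) * Real.exp (3 * r * ‖u‖))) :=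
            mul_le_mul_of_nonneg_left h hgn
        _ = ((2:ℝ)⁻¹ ^ N * (2 ^ b * (b.factorial : ℝ))) *
            (‖g u‖ * Real.exp (3 * r * ‖u‖)) := by ring
    rw [integral_const_mul, integral_const_mul] at key
    calc ‖serP g b N‖ * r ^ N
        ≤ ((((N - b).factorial : ℝ))⁻¹ * ∫ u, ‖g u‖ * ‖u‖ ^ N ∂volume) * r ^ N :=
          mul_le_mul_of_nonneg_right hPn (by positivity)
      _ = (r ^ N * (((N - b).factorial : ℝ))⁻¹) * ∫ u, ‖g u‖ * ‖u‖ ^ N ∂volume := by ring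
      _ ≤ ((2:ℝ)⁻¹ ^ N * (2 ^ b * (b.factorial : ℝ))) *
            ∫ u, ‖g u‖ * Real.exp (3 * r * ‖u‖) ∂volume := key
      _ = (2:ℝ)⁻¹ ^ N * (2 ^ b * (b.factorial : ℝ) *
            ∫ u, ‖g u‖ * Real.exp (3 * r * ‖u‖) ∂volume) := by ring
  · have h0 : serP g b N = 0 := by simp [serP, hbN]
    rw [h0, norm_zero, zero_mul]
    have h1 : (0:ℝ) ≤ 2 ^ b * (b.factorial : ℝ) := by positivity
    have h2 : (0:ℝ) ≤ (2:ℝ)⁻¹ ^ N := by positivity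
    exact mul_nonneg h2 (mul_nonneg h1 hintnn)

theorem serP_hasSum {g : 𝔼 → ℂ} (hg : HasExpMoments g) (b : ℕ) (z : 𝔼) :
    HasSum (fun N => serP g b N (fun _ => z)) (serF g b z) := by
  have hz1 : (0:ℝ) ≤ ‖z‖ + 1 := by positivity
  set C : ℝ := 2 ^ b * (b.factorial : ℝ) *
    ∫ u : 𝔼, ‖g u‖ * Real.exp (3 * (‖z‖ + 1) * ‖u‖) ∂volume with hC
  have hsummable : Summable (fun N => serP g b N (fun _ => z)) := by
    refine Summable.of_norm ?_
    refine Summable.of_nonneg_of_le (fun N => norm_nonneg _) (fun N => ?_)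
      ((summable_geometric_of_lt_one (r := (2:ℝ)⁻¹) (by norm_num) (by norm_num)).mul_right C)
    calc ‖serP g b N (fun _ => z)‖ ≤ ‖serP g b N‖ * ∏ _i : Fin N, ‖z‖ :=
          (serP g b N).le_opNorm _
      _ = ‖serP g b N‖ * ‖z‖ ^ N := by simp
      _ ≤ ‖serP g b N‖ * (‖z‖ + 1) ^ N := by
          gcongr <;> first
            | exact norm_nonneg _
            | linarith
      _ ≤ (2:ℝ)⁻¹ ^ N * C := serP_norm_le hg b N hz1
  rw [hsummable.hasSum_iff_tendsto_nat]
  rw [← Filter.tendsto_add_atTop_iff_nat b]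
  have hEq : ∀ M : ℕ, (∑ N ∈ Finset.range (M + b), serP g b N (fun _ => z)) =
      ∫ u, g u * (betaCLM u z) ^ b *
        (∑ m ∈ Finset.range M, (m.factorial : ℝ)⁻¹ • (ellCLM u z) ^ m) ∂volume := by
    intro M
    rw [add_comm M b, Finset.sum_range_add]
    have h0 : (∑ N ∈ Finset.range b, serP g b N (fun _ => z)) = 0 := by
      refine Finset.sum_eq_zero (fun N hN => ?_)
      have hNb : ¬ b ≤ N := by have := Finset.mem_range.1 hN; omega
      simp [serP, hNb]
    rw [h0, zero_add]
    have h1 : ∀ m, serP g b (b + m) (fun _ => z) =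
        ∫ u, (m.factorial : ℝ)⁻¹ • (g u * (betaCLM u z) ^ b * (ellCLM u z) ^ m) ∂volume := by
      intro m
      rw [serP_apply hg b (b + m) (Nat.le_add_right b m) z, Nat.add_sub_cancel_left,
        ← integral_smul]
    rw [Finset.sum_congr rfl (fun m _ => h1 m), ← integral_finset_sum]
    · refine integral_congr_ae (Filter.Eventually.of_forall fun u => ?_)
      simp only [Finset.mul_sum, mul_smul_comm]
    · intro m _
      exact (hg.integrable_term b m z).smul ((m.factorial : ℝ)⁻¹)
  simp only [hEq]
  refine tendsto_integral_of_dominated_convergence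
    (fun u => (b.factorial : ℝ) * ‖z‖ ^ b * (‖g u‖ * Real.exp ((1 + ‖z‖) * ‖u‖))) ?_ ?_ ?_ ?_
  · intro M
    refine (hg.1.mul (((continuous_betaCLM_apply z).pow b).aestronglyMeasurable)).mul ?_
    refine Continuous.aestronglyMeasurable ?_
    exact continuous_finset_sum _ (fun m _ => ((continuous_ellCLM_apply z).pow m).const_smul ((m.factorial : ℝ)⁻¹))
  · exact (hg.2 (1 + ‖z‖)).const_mul _
  · intro M
    refine Filter.Eventually.of_forall (fun u => ?_)
    have hsum : ‖∑ m ∈ Finset.range M, (m.factorial : ℝ)⁻¹ • (ellCLM u z) ^ m‖ ≤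
        Real.exp (‖u‖ * ‖z‖) := by
      refine (norm_sum_le _ _).trans ?_
      have hterm : ∀ m, ‖(m.factorial : ℝ)⁻¹ • (ellCLM u z) ^ m‖ =
          ‖ellCLM u z‖ ^ m / (m.factorial : ℝ) := by
        intro m
        rw [norm_smul, norm_pow, Real.norm_eq_abs,
          _root_.abs_of_nonneg (by positivity : (0:ℝ) ≤ ((m.factorial : ℝ))⁻¹), inv_mul_eq_div]
      rw [Finset.sum_congr rfl (fun m _ => hterm m)]
      refine (Real.sum_le_exp_of_nonneg (norm_nonneg _) M).trans ?_
      apply Real.exp_le_exp.2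
      exact (ellCLM_apply_norm_le u z)
    calc ‖g u * (betaCLM u z) ^ b *
          (∑ m ∈ Finset.range M, (m.factorial : ℝ)⁻¹ • (ellCLM u z) ^ m)‖
        = ‖g u‖ * ‖(betaCLM u z) ^ b‖ *
            ‖∑ m ∈ Finset.range M, (m.factorial : ℝ)⁻¹ • (ellCLM u z) ^ m‖ := by
          rw [norm_mul, norm_mul]
      _ ≤ ‖g u‖ * (‖u‖ * ‖z‖) ^ b * Real.exp (‖u‖ * ‖z‖) := by
          rw [norm_pow]
          gcongr <;> first
            | exact norm_nonneg _
            | exact betaCLM_apply_norm_le u z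
            | exact hsum
      _ ≤ ‖g u‖ * (((b.factorial : ℝ) * Real.exp ‖u‖) * ‖z‖ ^ b) * Real.exp (‖u‖ * ‖z‖) := by
          rw [mul_pow]
          gcongr <;> first
            | exact norm_nonneg _
            | exact pow_le_factorial_mul_exp (norm_nonneg u) b
      _ = (b.factorial : ℝ) * ‖z‖ ^ b *
            (‖g u‖ * (Real.exp ‖u‖ * Real.exp (‖u‖ * ‖z‖))) := by ring
      _ = (b.factorial : ℝ) * ‖z‖ ^ b * (‖g u‖ * Real.exp ((1 + ‖z‖) * ‖u‖)) := by
          rw [← Real.exp_add]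
          ring_nf
  · refine Filter.Eventually.of_forall (fun u => ?_)
    have hS := (NormedSpace.expSeries_div_hasSum_exp (ellCLM u z)).tendsto_sum_nat
    rw [← Complex.exp_eq_exp_ℂ] at hS
    have hfun : ∀ M : ℕ, (∑ m ∈ Finset.range M, (m.factorial : ℝ)⁻¹ • (ellCLM u z) ^ m) =
        ∑ m ∈ Finset.range M, (ellCLM u z) ^ m / (m.factorial : ℕ) := by
      intro M
      refine Finset.sum_congr rfl (fun m _ => ?_)
      rw [div_eq_inv_mul]
      rw [Complex.real_smul]
      push_cast
      ring
    simp only [hfun]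
    exact (hS.const_mul _)

theorem analyticAt_serF {g : 𝔼 → ℂ} (hg : HasExpMoments g) (b : ℕ) (z₀ : 𝔼) :
    AnalyticAt ℝ (serF g b) z₀ := by
  set rr : NNReal := ⟨‖z₀‖ + 1, by positivity⟩ with hrr
  have hrc : (rr : ℝ) = ‖z₀‖ + 1 := rfl
  have hradius : (rr : ℝ≥0∞) ≤ (serP g b).radius := by
    refine FormalMultilinearSeries.le_radius_of_bound _
      (2 ^ b * (b.factorial : ℝ) *
        ∫ u : 𝔼, ‖g u‖ * Real.exp (3 * (‖z₀‖ + 1) * ‖u‖) ∂volume) (fun N => ?_)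
    have hb := serP_norm_le hg b N (r := ‖z₀‖ + 1) (by positivity)
    rw [← hrc] at hb
    refine hb.trans ?_
    have hintnn : (0:ℝ) ≤ 2 ^ b * (b.factorial : ℝ) *
        ∫ u : 𝔼, ‖g u‖ * Real.exp (3 * (‖z₀‖ + 1) * ‖u‖) ∂volume := by
      have : (0:ℝ) ≤ ∫ u : 𝔼, ‖g u‖ * Real.exp (3 * (‖z₀‖ + 1) * ‖u‖) ∂volume :=
        integral_nonneg (fun u => by positivity)
      positivity
    have h2 : (2:ℝ)⁻¹ ^ N ≤ 1 := pow_le_one₀ (by norm_num) (by norm_num)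
    exact mul_le_of_le_one_left hintnn h2
  have hball : HasFPowerSeriesOnBall (serF g b) (serP g b) 0 rr := by
    refine ⟨hradius, ?_, fun {y} _ => ?_⟩
    · have h1 : (0:ℝ) < (rr : ℝ) := by rw [hrc]; positivity
      exact ENNReal.coe_pos.2 (by exact_mod_cast h1)
    · simpa using serP_hasSum hg b y
  refine hball.analyticAt_of_mem ?_
  rw [EMetric.mem_ball, edist_zero_right]
  have h1 : ‖z₀‖₊ < rr := by
    rw [← NNReal.coe_lt_coe, coe_nnnorm, hrc]
    linarith
  exact_mod_cast h1

/-! ### Gaussian integrability -/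

theorem integrable_gauss {c : ℝ} (hc : 0 < c) :
    Integrable (fun u : 𝔼 => Real.exp (-c * ‖u‖ ^ 2)) volume := by
  have h := GaussianFourier.integrable_cexp_neg_mul_sq_norm_add
    (b := (c : ℂ)) (by simpa using hc) (0 : ℂ) (0 : 𝔼)
  refine h.norm.congr (Filter.Eventually.of_forall fun u => ?_)
  show ‖cexp _‖ = _
  rw [Complex.norm_exp]
  norm_num
  exact Or.inl (by rw [← Complex.ofReal_pow, Complex.ofReal_re])

theorem memL2_of_gauss_bound {w : 𝔼 → ℝ} (hw : Continuous w) (C r : ℝ)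
    (hb : ∀ u, |w u| ≤ C * Real.exp (r * ‖u‖ - ‖u‖ ^ 2 / 8)) :
    MemLp w 2 (volume : Measure 𝔼) := by
  rw [memLp_two_iff_integrable_sq hw.aestronglyMeasurable]
  have hint : Integrable (fun u : 𝔼 => (C ^ 2 * Real.exp (16 * r ^ 2)) *
      Real.exp (-(8:ℝ)⁻¹ * ‖u‖ ^ 2)) volume := (integrable_gauss (by norm_num)).const_mul _
  refine hint.mono' ((hw.pow 2).aestronglyMeasurable) ?_
  refine Filter.Eventually.of_forall (fun u => ?_)
  have h1 : |w u| ≤ C * Real.exp (r * ‖u‖ - ‖u‖ ^ 2 / 8) := hb u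
  have h2 : ‖w u ^ 2‖ = |w u| ^ 2 := by
    rw [Real.norm_eq_abs, _root_.abs_pow]
  rw [h2]
  have h3 : |w u| ^ 2 ≤ (C * Real.exp (r * ‖u‖ - ‖u‖ ^ 2 / 8)) ^ 2 :=
    pow_le_pow_left₀ (abs_nonneg _) h1 2
  refine h3.trans ?_
  rw [mul_pow, ← Real.exp_nat_mul]
  have h4 : Real.exp ((2:ℕ) * (r * ‖u‖ - ‖u‖ ^ 2 / 8)) ≤
      Real.exp (16 * r ^ 2) * Real.exp (-(8:ℝ)⁻¹ * ‖u‖ ^ 2) := by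
    rw [← Real.exp_add]
    apply Real.exp_le_exp.2
    nlinarith [sq_nonneg (‖u‖ - 8 * r), sq_nonneg ‖u‖, sq_nonneg r]
  calc C ^ 2 * Real.exp ((2:ℕ) * (r * ‖u‖ - ‖u‖ ^ 2 / 8))
      ≤ C ^ 2 * (Real.exp (16 * r ^ 2) * Real.exp (-(8:ℝ)⁻¹ * ‖u‖ ^ 2)) := by
        exact mul_le_mul_of_nonneg_left h4 (sq_nonneg _)
    _ = (C ^ 2 * Real.exp (16 * r ^ 2)) * Real.exp (-(8:ℝ)⁻¹ * ‖u‖ ^ 2) := by ring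

theorem integrable_L2_mul {f : 𝔼 → ℂ} (hf : MemLp f 2 (volume : Measure 𝔼))
    {w : 𝔼 → ℝ} (hw2 : MemLp w 2 (volume : Measure 𝔼)) :
    Integrable (fun u : 𝔼 => ‖f u‖ * w u) volume := by
  have h := hf.norm.smul hw2 (p := 2) (q := 2) (r := 1)
    (hpqr := ⟨by simp only [inv_one, ENNReal.inv_two_add_inv_two]⟩)
  rw [memLp_one_iff_integrable] at h
  refine h.congr (Filter.Eventually.of_forall fun u => ?_)
  simp [smul_eq_mul, mul_comm]

/-- The weight functions appearing after expanding the Laguerre polynomial. -/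
def gfun (f : 𝔼 → ℂ) (m : ℕ) (u : 𝔼) : ℂ :=
  f u * ((((-(‖u‖ ^ 2 / 2)) ^ m) * Real.exp (-‖u‖ ^ 2 / 4) : ℝ) : ℂ)

theorem hasExpMoments_gfun {f : 𝔼 → ℂ} (hf : MemLp f 2 (volume : Measure 𝔼)) (m : ℕ) :
    HasExpMoments (gfun f m) := by
  have hc : Continuous fun u : 𝔼 => (-(‖u‖ ^ 2 / 2)) ^ m * Real.exp (-‖u‖ ^ 2 / 4) := by
    fun_prop
  constructor
  · exact hf.aestronglyMeasurable.mul
      ((Complex.continuous_ofReal.comp hc).aestronglyMeasurable)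
  · intro r
    have hwc : Continuous fun u : 𝔼 =>
        |(-(‖u‖ ^ 2 / 2)) ^ m * Real.exp (-‖u‖ ^ 2 / 4)| * Real.exp (r * ‖u‖) := by
      fun_prop
    have hbound : ∀ u : 𝔼,
        |(|(-(‖u‖ ^ 2 / 2)) ^ m * Real.exp (-‖u‖ ^ 2 / 4)| * Real.exp (r * ‖u‖))| ≤
          ((m.factorial : ℝ) * 4 ^ m) * Real.exp (r * ‖u‖ - ‖u‖ ^ 2 / 8) := by
      intro u
      have h1 : |(-(‖u‖ ^ 2 / 2)) ^ m| = (‖u‖ ^ 2 / 2) ^ m := by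
        rw [_root_.abs_pow, abs_neg, _root_.abs_of_nonneg (by positivity : (0:ℝ) ≤ ‖u‖ ^ 2 / 2)]
      have h2 : (‖u‖ ^ 2 / 2) ^ m ≤ (m.factorial : ℝ) * 4 ^ m * Real.exp (‖u‖ ^ 2 / 8) := by
        have h3 := pow_le_factorial_mul_exp (x := ‖u‖ ^ 2 / 8) (by positivity) m
        calc (‖u‖ ^ 2 / 2) ^ m = 4 ^ m * (‖u‖ ^ 2 / 8) ^ m := by
              rw [← mul_pow]; ring_nf
          _ ≤ 4 ^ m * ((m.factorial : ℝ) * Real.exp (‖u‖ ^ 2 / 8)) :=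
              mul_le_mul_of_nonneg_left h3 (by positivity)
          _ = (m.factorial : ℝ) * 4 ^ m * Real.exp (‖u‖ ^ 2 / 8) := by ring
      rw [_root_.abs_of_nonneg (by positivity : (0:ℝ) ≤
        |(-(‖u‖ ^ 2 / 2)) ^ m * Real.exp (-‖u‖ ^ 2 / 4)| * Real.exp (r * ‖u‖)),
        _root_.abs_mul, h1]
      rw [_root_.abs_of_nonneg (Real.exp_pos _).le]
      calc (‖u‖ ^ 2 / 2) ^ m * Real.exp (-‖u‖ ^ 2 / 4) * Real.exp (r * ‖u‖)
          ≤ ((m.factorial : ℝ) * 4 ^ m * Real.exp (‖u‖ ^ 2 / 8)) *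
              Real.exp (-‖u‖ ^ 2 / 4) * Real.exp (r * ‖u‖) := by
            gcongr
        _ = ((m.factorial : ℝ) * 4 ^ m) *
              (Real.exp (‖u‖ ^ 2 / 8) * Real.exp (-‖u‖ ^ 2 / 4) * Real.exp (r * ‖u‖)) := by ring
        _ = ((m.factorial : ℝ) * 4 ^ m) * Real.exp (r * ‖u‖ - ‖u‖ ^ 2 / 8) := by
            rw [← Real.exp_add, ← Real.exp_add]
            ring_nf
    have hw2 := memL2_of_gauss_bound hwc ((m.factorial : ℝ) * 4 ^ m) r hbound
    have hint := integrable_L2_mul hf hw2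
    refine hint.congr (Filter.Eventually.of_forall fun u => ?_)
    show ‖f u‖ * _ = ‖gfun f m u‖ * Real.exp (r * ‖u‖)
    rw [gfun, norm_mul, Complex.norm_real, Real.norm_eq_abs, mul_assoc]

/-! ### Laguerre expansion -/

def coefC (k α j a b : ℕ) : ℝ :=
  ((k + α).choose (k - j) : ℝ) / (j.factorial : ℝ) * (j.choose a : ℝ) * ((j - a).choose b : ℝ)

theorem laguerreL_expand (k α : ℕ) (A B W : ℝ) :
    laguerreL k α ((A + B - 2 * W) / 2) =
      ∑ j ∈ Finset.range (k + 1), ∑ a ∈ Finset.range (j + 1), ∑ b ∈ Finset.range (j - a + 1),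
        coefC k α j a b * (-(A / 2)) ^ a * (-(B / 2)) ^ (j - a - b) * W ^ b := by
  unfold laguerreL
  refine Finset.sum_congr rfl (fun j _ => ?_)
  have hx : -((A + B - 2 * W) / 2) = (-(A / 2)) + (W + (-(B / 2))) := by ring
  rw [hx, add_pow]
  rw [Finset.sum_congr rfl (fun a (_ : a ∈ Finset.range (j + 1)) => by rw [add_pow])]
  rw [Finset.mul_sum, Finset.sum_div]
  refine Finset.sum_congr rfl (fun a _ => ?_)
  rw [Finset.mul_sum, Finset.sum_mul, Finset.mul_sum, Finset.sum_div]
  refine Finset.sum_congr rfl (fun b _ => ?_)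
  unfold coefC
  ring

/-! ### Assembly -/

theorem pointwise_expand (k : ℕ) (f : 𝔼 → ℂ) (z u : 𝔼) :
    f (z - (z - u)) * laguerrePhi n k (z - u) *
        Complex.exp ((Complex.I / 2) * (((∑ j, z j * conj ((z - u) j)).im : ℝ) : ℂ)) =
      ∑ j ∈ Finset.range (k + 1), ∑ a ∈ Finset.range (j + 1), ∑ b ∈ Finset.range (j - a + 1),
        ((coefC k (n - 1) j a b : ℝ) : ℂ) * Complex.exp (-((‖z‖ ^ 2 : ℝ) : ℂ) / 4) *
          (((-(‖z‖ ^ 2 / 2) : ℝ)) : ℂ) ^ a *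
          (gfun f (j - a - b) u * (betaCLM u z) ^ b * Complex.exp (ellCLM u z)) := by
  have hzu : z - (z - u) = u := sub_sub_cancel z u
  obtain ⟨S, hSdef⟩ : ∃ S' : ℂ, inner (𝕜 := ℂ) u z = S' := ⟨_, rfl⟩
  have hS : (∑ j, z j * conj ((z - u) j)) = ((‖z‖ ^ 2 : ℝ) : ℂ) - S := by
    have h2 : (∑ j, z j * conj ((z - u) j)) =
        (∑ j, z j * conj (z j)) - ∑ j, z j * conj (u j) := by
      rw [← Finset.sum_sub_distrib]
      refine Finset.sum_congr rfl (fun j _ => ?_)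
      have h1 : (z - u) j = z j - u j := rfl
      rw [h1, map_sub, mul_sub]
    have h3 : (∑ j, z j * conj (z j)) = ((‖z‖ ^ 2 : ℝ) : ℂ) := by
      have hn : ‖z‖ ^ 2 = ∑ j, ‖z j‖ ^ 2 := by
        rw [EuclideanSpace.norm_eq]
        rw [Real.sq_sqrt (Finset.sum_nonneg fun j _ => sq_nonneg _)]
      rw [hn]
      push_cast
      refine Finset.sum_congr rfl (fun j _ => ?_)
      rw [Complex.mul_conj, Complex.normSq_eq_norm_sq]
      push_cast
      ring
    have h4 : (∑ j, z j * conj (u j)) = S := by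
      rw [← hSdef, PiLp.inner_apply]
      simp only [RCLike.inner_apply]
    rw [h2, h3, h4]
  have hnorm : ‖z - u‖ ^ 2 = ‖z‖ ^ 2 + ‖u‖ ^ 2 - 2 * S.re := by
    have h := norm_sub_sq (𝕜 := ℂ) z u
    have h2 : RCLike.re (inner (𝕜 := ℂ) z u) = S.re := by
      rw [inner_re_symm, hSdef]
      rfl
    rw [h2] at h
    linarith [h]
  have hexp : ((Real.exp (-‖z - u‖ ^ 2 / 4) : ℝ) : ℂ) *
      Complex.exp ((Complex.I / 2) * (((((‖z‖ ^ 2 : ℝ) : ℂ) - S).im : ℝ) : ℂ)) =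
      Complex.exp (-((‖z‖ ^ 2 : ℝ) : ℂ) / 4) * Complex.exp (-((‖u‖ ^ 2 : ℝ) : ℂ) / 4) *
        Complex.exp (ellCLM u z) := by
    rw [Complex.ofReal_exp, ← Complex.exp_add, ← Complex.exp_add, ← Complex.exp_add,
      ellCLM_apply, hSdef]
    congr 1
    have him : ((((‖z‖ ^ 2 : ℝ) : ℂ) - S).im : ℝ) = -S.im := by
      rw [Complex.sub_im, Complex.ofReal_im, zero_sub]
    rw [him, hnorm]
    apply Complex.ext <;> simp [← Complex.ofReal_pow] <;> ring
  calc f (z - (z - u)) * laguerrePhi n k (z - u) *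
        Complex.exp ((Complex.I / 2) * (((∑ j, z j * conj ((z - u) j)).im : ℝ) : ℂ))
      = f u * ((laguerreL k (n - 1) (‖z - u‖ ^ 2 / 2) : ℝ) : ℂ) *
        (((Real.exp (-‖z - u‖ ^ 2 / 4) : ℝ) : ℂ) *
          Complex.exp ((Complex.I / 2) * (((((‖z‖ ^ 2 : ℝ) : ℂ) - S).im : ℝ) : ℂ))) := by
        rw [hzu, hS, laguerrePhi, Complex.ofReal_mul]
        ring
    _ = f u * ((laguerreL k (n - 1) ((‖z‖ ^ 2 + ‖u‖ ^ 2 - 2 * S.re) / 2) : ℝ) : ℂ) *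
        (Complex.exp (-((‖z‖ ^ 2 : ℝ) : ℂ) / 4) * Complex.exp (-((‖u‖ ^ 2 : ℝ) : ℂ) / 4) *
          Complex.exp (ellCLM u z)) := by
        rw [hexp, hnorm]
    _ = ∑ j ∈ Finset.range (k + 1), ∑ a ∈ Finset.range (j + 1),
          ∑ b ∈ Finset.range (j - a + 1),
        ((coefC k (n - 1) j a b : ℝ) : ℂ) * Complex.exp (-((‖z‖ ^ 2 : ℝ) : ℂ) / 4) *
          (((-(‖z‖ ^ 2 / 2) : ℝ)) : ℂ) ^ a *
          (gfun f (j - a - b) u * (betaCLM u z) ^ b * Complex.exp (ellCLM u z)) := by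
        rw [laguerreL_expand k (n - 1) (‖z‖ ^ 2) (‖u‖ ^ 2) S.re]
        push_cast
        simp only [Finset.sum_mul, Finset.mul_sum]
        refine Finset.sum_congr rfl (fun j _ => ?_)
        refine Finset.sum_congr rfl (fun a _ => ?_)
        refine Finset.sum_congr rfl (fun b _ => ?_)
        simp only [gfun, betaCLM_apply, hSdef]
        push_cast
        ring_nf

theorem specProj_eq (k : ℕ) (f : 𝔼 → ℂ) (hf : MemLp f 2 (volume : Measure 𝔼)) (z : 𝔼) :
    specProj n k f z =
      ∑ j ∈ Finset.range (k + 1), ∑ a ∈ Finset.range (j + 1), ∑ b ∈ Finset.range (j - a + 1),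
        ((coefC k (n - 1) j a b : ℝ) : ℂ) * Complex.exp (-((‖z‖ ^ 2 : ℝ) : ℂ) / 4) *
          (((-(‖z‖ ^ 2 / 2) : ℝ)) : ℂ) ^ a * serF (gfun f (j - a - b)) b z := by
  have hInt : ∀ j a b : ℕ, Integrable (fun u : 𝔼 =>
      ((coefC k (n - 1) j a b : ℝ) : ℂ) * Complex.exp (-((‖z‖ ^ 2 : ℝ) : ℂ) / 4) *
        (((-(‖z‖ ^ 2 / 2) : ℝ)) : ℂ) ^ a *
        (gfun f (j - a - b) u * (betaCLM u z) ^ b * Complex.exp (ellCLM u z))) volume :=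
    fun j a b => ((hasExpMoments_gfun hf (j - a - b)).integrable_exp_term b z).const_mul _
  calc specProj n k f z
      = ∫ u, (fun w => f (z - w) * laguerrePhi n k w *
          Complex.exp ((Complex.I / 2) * (((∑ j, z j * conj (w j)).im : ℝ) : ℂ))) (z - u)
          ∂volume := (integral_sub_left_eq_self _ volume z).symm
    _ = ∫ u, ∑ j ∈ Finset.range (k + 1), ∑ a ∈ Finset.range (j + 1),
          ∑ b ∈ Finset.range (j - a + 1),
        ((coefC k (n - 1) j a b : ℝ) : ℂ) * Complex.exp (-((‖z‖ ^ 2 : ℝ) : ℂ) / 4) *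
          (((-(‖z‖ ^ 2 / 2) : ℝ)) : ℂ) ^ a *
          (gfun f (j - a - b) u * (betaCLM u z) ^ b * Complex.exp (ellCLM u z)) ∂volume := by
        refine integral_congr_ae (Filter.Eventually.of_forall fun u => ?_)
        exact pointwise_expand k f z u
    _ = ∑ j ∈ Finset.range (k + 1), ∑ a ∈ Finset.range (j + 1),
          ∑ b ∈ Finset.range (j - a + 1),
        ((coefC k (n - 1) j a b : ℝ) : ℂ) * Complex.exp (-((‖z‖ ^ 2 : ℝ) : ℂ) / 4) *
          (((-(‖z‖ ^ 2 / 2) : ℝ)) : ℂ) ^ a * serF (gfun f (j - a - b)) b z := by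
        rw [integral_finset_sum _ (fun j _ => integrable_finset_sum _
          (fun a _ => integrable_finset_sum _ (fun b _ => hInt j a b)))]
        refine Finset.sum_congr rfl fun j _ => ?_
        rw [integral_finset_sum _ (fun a _ => integrable_finset_sum _ (fun b _ => hInt j a b))]
        refine Finset.sum_congr rfl fun a _ => ?_
        rw [integral_finset_sum _ (fun b _ => hInt j a b)]
        refine Finset.sum_congr rfl fun b _ => ?_
        rw [integral_const_mul]
        rfl

theorem analyticAt_normSq (z₀ : 𝔼) : AnalyticAt ℝ (fun z : 𝔼 => (‖z‖ ^ 2 : ℝ)) z₀ := by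
  have h : (fun z : 𝔼 => (‖z‖ ^ 2 : ℝ)) = fun z : 𝔼 => ∑ j,
      ((Complex.reCLM.comp ((EuclideanSpace.proj (𝕜 := ℂ) j).restrictScalars ℝ)) z ^ 2 +
       (Complex.imCLM.comp ((EuclideanSpace.proj (𝕜 := ℂ) j).restrictScalars ℝ)) z ^ 2) := by
    funext z
    rw [EuclideanSpace.norm_eq, Real.sq_sqrt (Finset.sum_nonneg fun j _ => sq_nonneg _)]
    refine Finset.sum_congr rfl fun j _ => ?_
    simp only [ContinuousLinearMap.coe_comp', Function.comp_apply,
      ContinuousLinearMap.coe_restrictScalars',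
      Complex.reCLM_apply, Complex.imCLM_apply]
    have hp : (EuclideanSpace.proj (𝕜 := ℂ) j) z = z j := rfl
    rw [hp, Complex.sq_norm, Complex.normSq_apply]
    ring
  rw [h]
  refine Finset.analyticAt_fun_sum _ fun j _ => ?_
  exact ((ContinuousLinearMap.analyticAt _ z₀).pow 2).add
    ((ContinuousLinearMap.analyticAt _ z₀).pow 2)

theorem analyticAt_cexp_comp {φ : 𝔼 → ℂ} {z₀ : 𝔼} (hφ : AnalyticAt ℝ φ z₀) :
    AnalyticAt ℝ (fun z => Complex.exp (φ z)) z₀ := by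
  have hexp : AnalyticAt ℂ Complex.exp (φ z₀) :=
    Complex.differentiable_exp.differentiableOn.analyticAt (Filter.univ_mem)
  exact (hexp.restrictScalars).comp hφ

theorem analyticAt_ofReal_comp {w : 𝔼 → ℝ} {z₀ : 𝔼} (hw : AnalyticAt ℝ w z₀) :
    AnalyticAt ℝ (fun z => ((w z : ℝ) : ℂ)) z₀ :=
  (Complex.ofRealCLM.analyticAt _).comp hw

end

end SpecProjAux

/-- The spectral projection `z ↦ f × φ_k^{n-1}(z)` of an `L²` function is real analytic. -/
theorem specProj_analytic
    (n k : ℕ) (hn : 1 ≤ n) (f : EuclideanSpace ℂ (Fin n) → ℂ) (hf : MemLp f 2 volume) :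
    ∀ z : EuclideanSpace ℂ (Fin n), AnalyticAt ℝ (specProj n k f) z := by
  intro z
  have heq : specProj n k f = fun z => ∑ j ∈ Finset.range (k + 1),
      ∑ a ∈ Finset.range (j + 1), ∑ b ∈ Finset.range (j - a + 1),
        ((SpecProjAux.coefC k (n - 1) j a b : ℝ) : ℂ) *
          Complex.exp (-((‖z‖ ^ 2 : ℝ) : ℂ) / 4) *
          (((-(‖z‖ ^ 2 / 2) : ℝ)) : ℂ) ^ a *
          SpecProjAux.serF (SpecProjAux.gfun f (j - a - b)) b z :=
    funext (SpecProjAux.specProj_eq k f hf)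
  rw [heq]
  refine Finset.analyticAt_fun_sum _ fun j _ => ?_
  refine Finset.analyticAt_fun_sum _ fun a _ => ?_
  refine Finset.analyticAt_fun_sum _ fun b _ => ?_
  have h0 := SpecProjAux.analyticAt_normSq (n := n) z
  have h1 : AnalyticAt ℝ (fun z : EuclideanSpace ℂ (Fin n) =>
      Complex.exp (-((‖z‖ ^ 2 : ℝ) : ℂ) / 4)) z := by
    refine SpecProjAux.analyticAt_cexp_comp ?_
    have h2 := ((SpecProjAux.analyticAt_ofReal_comp h0).neg).mul
      (analyticAt_const (v := (4 : ℂ)⁻¹))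
    refine h2.congr (Filter.Eventually.of_forall fun z => ?_)
    simp only [Pi.neg_apply, Pi.mul_apply]
    ring
  have hX : AnalyticAt ℝ (fun z : EuclideanSpace ℂ (Fin n) =>
      (((-(‖z‖ ^ 2 / 2) : ℝ)) : ℂ) ^ a) z := by
    refine AnalyticAt.pow ?_ a
    refine SpecProjAux.analyticAt_ofReal_comp ?_
    have h2 := h0.mul (analyticAt_const (v := -(2 : ℝ)⁻¹))
    refine h2.congr (Filter.Eventually.of_forall fun z => ?_)
    simp only [Pi.neg_apply, Pi.mul_apply]
    ring
  have hserF := SpecProjAux.analyticAt_serF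
    (SpecProjAux.hasExpMoments_gfun hf (j - a - b)) b z
  exact ((analyticAt_const.mul h1).mul hX).mul hserF
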